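/- Let F be a non-empty simple graph and B a convex subset of the space of symmetric N×N matrices with entries in [0,1] and zero diagonal. Then sup_{X,Y ∈ B} |hom_F(X) − hom_F(Y)| ≤ N · sup_{X,Y∈B} ‖X − Y‖_op · Σ_{e ∈ E(F)} sup_{W ∈ B} hom_{F_{(e)}}(W), where F_{(e)} is the induced subgraph on V(F) minus the two endpoints of e. -/

import Mathlib

/-- The ℓ²→ℓ² operator norm of a real N×N matrix. -/
noncomputable def opNorm {N : ℕ} (M : Matrix (Fin N) (Fin N) ℝ) : ℝ :=
  ‖(Matrix.toEuclideanCLM (𝕜 := ℝ) M : EuclideanSpace ℝ (Fin N) →L[ℝ] EuclideanSpace ℝ (Fin N))‖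

/-- The space `𝒳_N` of symmetric N×N matrices with entries in `[0,1]` and zero
diagonal. -/
def XN (N : ℕ) : Set (Matrix (Fin N) (Fin N) ℝ) :=
  {X | X.IsSymm ∧ (∀ i j, X i j ∈ Set.Icc (0:ℝ) 1) ∧ ∀ i, X i i = 0}

/-- Homomorphism counting function of the induced subgraph `F[s]`. -/
noncomputable def homOn {n N : ℕ} (F : SimpleGraph (Fin n)) [DecidableRel F.Adj]
    (s : Finset (Fin n)) (X : Matrix (Fin N) (Fin N) ℝ) : ℝ :=
  ∑ φ : {x // x ∈ s} → Fin N,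
    ∏ q ∈ Finset.univ.filter
        (fun q : {x // x ∈ s} × {x // x ∈ s} =>
          (q.1 : Fin n) < (q.2 : Fin n) ∧ F.Adj q.1 q.2),
      X (φ q.1) (φ q.2)

lemma norm_le_sqrt {N : ℕ} (f : Fin N → ℝ) (hf : ∀ u, 0 ≤ f u ∧ f u ≤ 1) :
    ‖(WithLp.equiv 2 (Fin N → ℝ)).symm f‖ ≤ Real.sqrt N := by
  rw [EuclideanSpace.norm_eq]
  apply Real.sqrt_le_sqrt
  calc ∑ u, ‖(WithLp.equiv 2 (Fin N → ℝ)).symm f u‖ ^ 2 ≤ ∑ _u : Fin N, 1 := by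
        apply Finset.sum_le_sum
        intro u _
        have := hf u
        simp only [WithLp.equiv_symm_apply, PiLp.toLp_apply, Real.norm_eq_abs, sq_abs]
        nlinarith [this.1, this.2]
    _ = N := by simp

lemma bilin_bound {N : ℕ} (Z : Matrix (Fin N) (Fin N) ℝ) (f g : Fin N → ℝ)
    (hf : ∀ u, 0 ≤ f u ∧ f u ≤ 1) (hg : ∀ u, 0 ≤ g u ∧ g u ≤ 1) :
    |∑ u, ∑ v, f u * Z u v * g v| ≤ (N : ℝ) * opNorm Z := by
  set F : EuclideanSpace ℝ (Fin N) := (WithLp.equiv 2 _).symm f with hF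
  set G : EuclideanSpace ℝ (Fin N) := (WithLp.equiv 2 _).symm g with hG
  have key : ∑ u, ∑ v, f u * Z u v * g v =
      inner ℝ F ((Matrix.toEuclideanCLM (𝕜 := ℝ) Z) G) := by
    have hTG : (Matrix.toEuclideanCLM (𝕜 := ℝ) Z) G
        = (WithLp.equiv 2 (Fin N → ℝ)).symm (Matrix.toLin' Z g) := by
      rw [hG, WithLp.equiv_symm_apply, Matrix.toEuclideanCLM_toLp, Matrix.toLin'_apply]
    rw [PiLp.inner_apply, hTG]
    apply Finset.sum_congr rfl
    intro u _
    simp only [F, WithLp.equiv_symm_apply, PiLp.toLp_apply, RCLike.inner_apply, starRingEnd_apply,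
      Matrix.toLin'_apply, Matrix.mulVec, dotProduct, star_trivial]
    rw [Finset.sum_mul]
    apply Finset.sum_congr rfl
    intro v _; ring
  rw [key]
  calc |inner ℝ F ((Matrix.toEuclideanCLM (𝕜 := ℝ) Z) G)|
      ≤ ‖F‖ * ‖(Matrix.toEuclideanCLM (𝕜 := ℝ) Z) G‖ := abs_real_inner_le_norm _ _
    _ ≤ ‖F‖ * (opNorm Z * ‖G‖) := by
        gcongr
        exact (Matrix.toEuclideanCLM (𝕜 := ℝ) Z).le_opNorm G
    _ ≤ Real.sqrt N * (opNorm Z * Real.sqrt N) := by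
        have h1 := norm_le_sqrt f hf
        have h2 := norm_le_sqrt g hg
        have h0 : (0:ℝ) ≤ opNorm Z := norm_nonneg _
        exact mul_le_mul h1 (mul_le_mul_of_nonneg_left h2 h0)
          (mul_nonneg h0 (norm_nonneg _)) (Real.sqrt_nonneg _)
    _ = (N : ℝ) * opNorm Z := by
        rw [show Real.sqrt N * (opNorm Z * Real.sqrt N)
          = (Real.sqrt N * Real.sqrt N) * opNorm Z by ring,
          Real.mul_self_sqrt (Nat.cast_nonneg N)]

lemma mem_compl_pair {n : ℕ} {a b x : Fin n} :
    x ∈ ({a, b}ᶜ : Finset (Fin n)) ↔ x ≠ a ∧ x ≠ b := by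
  simp [not_or]

/-- The splitting equivalence. -/
def splitEquiv {n N : ℕ} (a b : Fin n) (hab : a ≠ b) :
    (Fin n → Fin N) ≃
      (({x // x ∈ ({a, b}ᶜ : Finset (Fin n))} → Fin N) × (Fin N × Fin N)) where
  toFun φ := (fun x => φ x.1, (φ a, φ b))
  invFun p := fun x =>
    if h : x ∈ ({a, b}ᶜ : Finset (Fin n)) then p.1 ⟨x, h⟩ else if x = a then p.2.1 else p.2.2
  left_inv φ := by
    funext x
    dsimp only
    by_cases h : x ∈ ({a, b}ᶜ : Finset (Fin n))
    · rw [dif_pos h]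
    · rw [dif_neg h]
      rw [mem_compl_pair, not_and_or, not_ne_iff, not_ne_iff] at h
      rcases h with h | h
      · rw [if_pos h, h]
      · rw [if_neg (by rw [h]; exact hab.symm), h]
  right_inv p := by
    obtain ⟨ψ, u, v⟩ := p
    simp only [Prod.mk.injEq]
    refine ⟨?_, ?_, ?_⟩
    · funext x
      rw [dif_pos x.2]
    · rw [dif_neg (by simp)]
      simp
    · rw [dif_neg (by simp)]
      simp [hab.symm]

lemma prod_entries_nonneg {n N : ℕ} {W : Matrix (Fin N) (Fin N) ℝ} (hW : W ∈ XN N)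
    {α : Type*} (T : Finset α) (f g : α → Fin N) :
    0 ≤ ∏ q ∈ T, W (f q) (g q) :=
  Finset.prod_nonneg fun q _ => (hW.2.1 (f q) (g q)).1

lemma prod_entries_le_one {n N : ℕ} {W : Matrix (Fin N) (Fin N) ℝ} (hW : W ∈ XN N)
    {α : Type*} (T : Finset α) (f g : α → Fin N) :
    ∏ q ∈ T, W (f q) (g q) ≤ 1 :=
  Finset.prod_le_one (fun q _ => (hW.2.1 (f q) (g q)).1)
    (fun q _ => (hW.2.1 (f q) (g q)).2)

/-- Explicit inverse of the splitting equivalence. -/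
def Phi {n N : ℕ} (a b : Fin n) (hab : a ≠ b)
    (ψ : {x // x ∈ ({a, b}ᶜ : Finset (Fin n))} → Fin N) (u v : Fin N) : Fin n → Fin N :=
  (splitEquiv a b hab).symm (ψ, (u, v))

lemma Phi_mem {n N : ℕ} {a b : Fin n} (hab : a ≠ b)
    {ψ : {x // x ∈ ({a, b}ᶜ : Finset (Fin n))} → Fin N} {u v : Fin N} {x : Fin n}
    (hx : x ∈ ({a, b}ᶜ : Finset (Fin n))) : Phi a b hab ψ u v x = ψ ⟨x, hx⟩ :=
  dif_pos hx

lemma Phi_a {n N : ℕ} {a b : Fin n} (hab : a ≠ b)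
    {ψ : {x // x ∈ ({a, b}ᶜ : Finset (Fin n))} → Fin N} {u v : Fin N} :
    Phi a b hab ψ u v a = u := by
  show (if h : a ∈ ({a, b}ᶜ : Finset (Fin n)) then ψ ⟨a, h⟩ else if a = a then u else v) = u
  rw [dif_neg (by simp)]
  simp

lemma Phi_b {n N : ℕ} {a b : Fin n} (hab : a ≠ b)
    {ψ : {x // x ∈ ({a, b}ᶜ : Finset (Fin n))} → Fin N} {u v : Fin N} :
    Phi a b hab ψ u v b = v := by
  show (if h : b ∈ ({a, b}ᶜ : Finset (Fin n)) then ψ ⟨b, h⟩ else if b = a then u else v) = v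
  rw [dif_neg (by simp)]
  simp [hab.symm]

lemma Phi_ind {n N : ℕ} {a b : Fin n} (hab : a ≠ b)
    {ψ : {x // x ∈ ({a, b}ᶜ : Finset (Fin n))} → Fin N} {u v u' v' : Fin N} {x : Fin n}
    (h1 : x ≠ a ∨ u = u') (h2 : x ≠ b ∨ v = v') :
    Phi a b hab ψ u v x = Phi a b hab ψ u' v' x := by
  by_cases hx : x ∈ ({a, b}ᶜ : Finset (Fin n))
  · rw [Phi_mem hab hx, Phi_mem hab hx]
  · rw [mem_compl_pair, not_and_or, not_ne_iff, not_ne_iff] at hx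
    rcases hx with rfl | rfl
    · rcases h1 with h1 | rfl
      · exact absurd rfl h1
      · rw [Phi_a hab, Phi_a hab]
    · rcases h2 with h2 | rfl
      · exact absurd rfl h2
      · rw [Phi_b hab, Phi_b hab]

lemma term_bound {n N : ℕ} (F : SimpleGraph (Fin n)) [DecidableRel F.Adj]
    {e : Fin n × Fin n}
    (he : e ∈ Finset.univ.filter (fun q : Fin n × Fin n => q.1 < q.2 ∧ F.Adj q.1 q.2))
    (W Z : Matrix (Fin N) (Fin N) ℝ) (hW : W ∈ XN N) :
    |∑ φ : Fin n → Fin N,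
        (∏ q ∈ (Finset.univ.filter
            (fun q : Fin n × Fin n => q.1 < q.2 ∧ F.Adj q.1 q.2)).erase e,
          W (φ q.1) (φ q.2)) * Z (φ e.1) (φ e.2)| ≤
      (N : ℝ) * opNorm Z * homOn F ({e.1, e.2}ᶜ) W := by
  have he' : e.1 < e.2 ∧ F.Adj e.1 e.2 := by simpa using he
  obtain ⟨hlt, hadj⟩ := he'
  set a := e.1 with hae
  set b := e.2 with hbe
  have hab : a ≠ b := ne_of_lt hlt
  set Ed := Finset.univ.filter (fun q : Fin n × Fin n => q.1 < q.2 ∧ F.Adj q.1 q.2) with hEd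
  have hhomnn : 0 ≤ homOn F ({a, b}ᶜ) W := by
    unfold homOn
    exact Finset.sum_nonneg fun ψ _ => prod_entries_nonneg (n := n) hW _ _ _
  rcases Nat.eq_zero_or_pos N with hN | hN
  · subst hN
    haveI : IsEmpty (Fin n → Fin 0) := ⟨fun f => (f a).elim0⟩
    rw [Fintype.sum_empty]
    simp
  set u0 : Fin N := ⟨0, hN⟩ with hu0
  -- edge classes
  set pa : Fin n × Fin n → Prop := fun q => q.1 = a ∨ q.2 = a with hpa
  set pb : Fin n × Fin n → Prop := fun q => q.1 = b ∨ q.2 = b with hpb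
  set A := (Ed.erase e).filter pa with hA
  set Bc := ((Ed.erase e).filter (fun q => ¬ pa q)).filter pb with hBc
  set C := ((Ed.erase e).filter (fun q => ¬ pa q)).filter (fun q => ¬ pb q) with hC
  have hAmem : ∀ q ∈ A, q.1 ≠ b ∧ q.2 ≠ b := by
    intro q hq
    rw [hA, Finset.mem_filter, Finset.mem_erase] at hq
    obtain ⟨⟨hne, hqEd⟩, hqa⟩ := hq
    rw [hEd, Finset.mem_filter] at hqEd
    obtain ⟨-, hqlt, -⟩ := hqEd
    rcases hqa with h | h
    · refine ⟨by rw [h]; exact hab, ?_⟩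
      intro h2
      exact hne (Prod.ext (by rw [h, hae]) (by rw [h2, hbe]))
    · refine ⟨?_, by rw [h]; exact hab⟩
      intro h2
      rw [h2, h] at hqlt
      exact absurd hlt (lt_asymm hqlt)
  have hBmem : ∀ q ∈ Bc, q.1 ≠ a ∧ q.2 ≠ a := by
    intro q hq
    rw [hBc, Finset.mem_filter, Finset.mem_filter] at hq
    obtain ⟨⟨-, hnpa⟩, -⟩ := hq
    simp only [hpa, not_or] at hnpa
    exact hnpa
  have hCmem : ∀ q ∈ C, (q.1 ∈ ({a, b}ᶜ : Finset (Fin n)) ∧ q.2 ∈ ({a, b}ᶜ : Finset (Fin n))) := by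
    intro q hq
    rw [hC, Finset.mem_filter, Finset.mem_filter] at hq
    obtain ⟨⟨-, hnpa⟩, hnpb⟩ := hq
    simp only [hpa, not_or] at hnpa
    simp only [hpb, not_or] at hnpb
    exact ⟨mem_compl_pair.mpr ⟨hnpa.1, hnpb.1⟩, mem_compl_pair.mpr ⟨hnpa.2, hnpb.2⟩⟩
  -- split the product over the erased edge set
  have hsplit : ∀ (ψ : {x // x ∈ ({a, b}ᶜ : Finset (Fin n))} → Fin N) (u v : Fin N),
      (∏ q ∈ Ed.erase e, W (Phi a b hab ψ u v q.1) (Phi a b hab ψ u v q.2)) =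
      (∏ q ∈ A, W (Phi a b hab ψ u u0 q.1) (Phi a b hab ψ u u0 q.2)) *
        ((∏ q ∈ Bc, W (Phi a b hab ψ u0 v q.1) (Phi a b hab ψ u0 v q.2)) *
          (∏ q ∈ C, W (Phi a b hab ψ u0 u0 q.1) (Phi a b hab ψ u0 u0 q.2))) := by
    intro ψ u v
    rw [← Finset.prod_filter_mul_prod_filter_not (Ed.erase e) pa
        (fun q => W (Phi a b hab ψ u v q.1) (Phi a b hab ψ u v q.2)),
      ← Finset.prod_filter_mul_prod_filter_not ((Ed.erase e).filter (fun q => ¬ pa q)) pb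
        (fun q => W (Phi a b hab ψ u v q.1) (Phi a b hab ψ u v q.2))]
    congr 1
    · apply Finset.prod_congr hA.symm
      intro q hq
      obtain ⟨h1, h2⟩ := hAmem q hq
      rw [Phi_ind hab (Or.inr rfl) (Or.inl h1), Phi_ind hab (Or.inr rfl) (Or.inl h2)]
    congr 1
    · apply Finset.prod_congr hBc.symm
      intro q hq
      obtain ⟨h1, h2⟩ := hBmem q hq
      rw [Phi_ind hab (Or.inl h1) (Or.inr rfl), Phi_ind hab (Or.inl h2) (Or.inr rfl)]
    · apply Finset.prod_congr hC.symm
      intro q hq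
      obtain ⟨h1, h2⟩ := hCmem q hq
      have h1' := mem_compl_pair.mp h1
      have h2' := mem_compl_pair.mp h2
      rw [Phi_ind hab (Or.inl h1'.1) (Or.inl h1'.2), Phi_ind hab (Or.inl h2'.1) (Or.inl h2'.2)]
  -- re-index the sum
  have hsum : ∀ (f : (Fin n → Fin N) → ℝ),
      ∑ φ : Fin n → Fin N, f φ =
        ∑ ψ : {x // x ∈ ({a, b}ᶜ : Finset (Fin n))} → Fin N, ∑ u : Fin N, ∑ v : Fin N,
          f (Phi a b hab ψ u v) := by
    intro f
    rw [← Equiv.sum_comp (splitEquiv (N := N) a b hab).symm f, Fintype.sum_prod_type]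
    apply Finset.sum_congr rfl
    intro ψ _
    rw [Fintype.sum_prod_type]
    rfl
  rw [hsum]
  -- bound
  have key : ∀ ψ : {x // x ∈ ({a, b}ᶜ : Finset (Fin n))} → Fin N,
      |∑ u : Fin N, ∑ v : Fin N,
        (∏ q ∈ Ed.erase e, W (Phi a b hab ψ u v q.1) (Phi a b hab ψ u v q.2)) *
          Z (Phi a b hab ψ u v a) (Phi a b hab ψ u v b)| ≤
      (∏ q ∈ C, W (Phi a b hab ψ u0 u0 q.1) (Phi a b hab ψ u0 u0 q.2)) *
        ((N : ℝ) * opNorm Z) := by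
    intro ψ
    have hrw : ∀ u v : Fin N,
        (∏ q ∈ Ed.erase e, W (Phi a b hab ψ u v q.1) (Phi a b hab ψ u v q.2)) *
          Z (Phi a b hab ψ u v a) (Phi a b hab ψ u v b) =
        (∏ q ∈ C, W (Phi a b hab ψ u0 u0 q.1) (Phi a b hab ψ u0 u0 q.2)) *
          ((∏ q ∈ A, W (Phi a b hab ψ u u0 q.1) (Phi a b hab ψ u u0 q.2)) * Z u v *
            (∏ q ∈ Bc, W (Phi a b hab ψ u0 v q.1) (Phi a b hab ψ u0 v q.2))) := by
      intro u v
      rw [hsplit ψ u v, Phi_a hab, Phi_b hab]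
      ring
    simp_rw [hrw, ← Finset.mul_sum]
    rw [abs_mul, abs_of_nonneg (prod_entries_nonneg (n := n) hW _ _ _)]
    apply mul_le_mul_of_nonneg_left _ (prod_entries_nonneg (n := n) hW _ _ _)
    exact bilin_bound Z _ _
      (fun u => ⟨prod_entries_nonneg (n := n) hW _ _ _, prod_entries_le_one (n := n) hW _ _ _⟩)
      (fun v => ⟨prod_entries_nonneg (n := n) hW _ _ _, prod_entries_le_one (n := n) hW _ _ _⟩)
  calc |∑ ψ, ∑ u : Fin N, ∑ v : Fin N,
        (∏ q ∈ Ed.erase e, W (Phi a b hab ψ u v q.1) (Phi a b hab ψ u v q.2)) *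
          Z (Phi a b hab ψ u v a) (Phi a b hab ψ u v b)|
      ≤ ∑ ψ, |∑ u : Fin N, ∑ v : Fin N,
        (∏ q ∈ Ed.erase e, W (Phi a b hab ψ u v q.1) (Phi a b hab ψ u v q.2)) *
          Z (Phi a b hab ψ u v a) (Phi a b hab ψ u v b)| := Finset.abs_sum_le_sum_abs _ _
    _ ≤ ∑ ψ, (∏ q ∈ C, W (Phi a b hab ψ u0 u0 q.1) (Phi a b hab ψ u0 u0 q.2)) *
          ((N : ℝ) * opNorm Z) := Finset.sum_le_sum fun ψ _ => key ψ
    _ = (N : ℝ) * opNorm Z *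
          ∑ ψ, (∏ q ∈ C, W (Phi a b hab ψ u0 u0 q.1) (Phi a b hab ψ u0 u0 q.2)) := by
        rw [← Finset.sum_mul, mul_comm]
    _ = (N : ℝ) * opNorm Z * homOn F ({a, b}ᶜ) W := by
        congr 1
        unfold homOn
        apply Finset.sum_congr rfl
        intro ψ _
        apply Finset.prod_bij'
          (i := fun (q : Fin n × Fin n) (hq : q ∈ C) =>
            ((⟨q.1, (hCmem q hq).1⟩ : {x // x ∈ ({a, b}ᶜ : Finset (Fin n))}),
             (⟨q.2, (hCmem q hq).2⟩ : {x // x ∈ ({a, b}ᶜ : Finset (Fin n))})))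
          (j := fun (q : {x // x ∈ ({a, b}ᶜ : Finset (Fin n))} ×
              {x // x ∈ ({a, b}ᶜ : Finset (Fin n))}) (_ : q ∈ _) =>
            ((q.1 : Fin n), (q.2 : Fin n)))
        · intro q hq
          have := hq
          rw [hC, Finset.mem_filter, Finset.mem_filter, Finset.mem_erase, hEd,
            Finset.mem_filter] at this
          simp only [Finset.mem_filter, Finset.mem_univ, true_and]
          exact this.1.1.2.2
        · intro q hq; rfl
        · intro q hq; rfl
        · intro q hq
          rw [Phi_mem hab (hCmem q hq).1, Phi_mem hab (hCmem q hq).2]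
        · intro q hq
          simp only [Finset.mem_filter, Finset.mem_univ, true_and] at hq
          have h1 := mem_compl_pair.mp q.1.2
          have h2 := mem_compl_pair.mp q.2.2
          rw [hC, Finset.mem_filter, Finset.mem_filter, Finset.mem_erase, hEd,
            Finset.mem_filter]
          refine ⟨⟨⟨?_, ?_⟩, ?_⟩, ?_⟩
          · intro hqe
            exact h1.1 (congrArg Prod.fst hqe)
          · exact ⟨Finset.mem_univ _, hq⟩
          · simp only [hpa, not_or]
            exact ⟨h1.1, h2.1⟩
          · simp only [hpb, not_or]
            exact ⟨h1.2, h2.2⟩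

lemma homOn_univ {n N : ℕ} (F : SimpleGraph (Fin n)) [DecidableRel F.Adj]
    (X : Matrix (Fin N) (Fin N) ℝ) :
    homOn F Finset.univ X =
      ∑ φ : Fin n → Fin N,
        ∏ q ∈ Finset.univ.filter
            (fun q : Fin n × Fin n => q.1 < q.2 ∧ F.Adj q.1 q.2),
          X (φ q.1) (φ q.2) := by
  unfold homOn
  apply Fintype.sum_equiv
    (Equiv.arrowCongr (Equiv.subtypeUnivEquiv (fun x => Finset.mem_univ x)) (Equiv.refl (Fin N)))
  intro ψ
  apply Finset.prod_bij' (i := fun (q : {x // x ∈ (Finset.univ : Finset (Fin n))} ×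
      {x // x ∈ (Finset.univ : Finset (Fin n))}) (_ : q ∈ _) => ((q.1 : Fin n), (q.2 : Fin n)))
    (j := fun (q : Fin n × Fin n) (_ : q ∈ _) =>
      (⟨q.1, Finset.mem_univ _⟩, ⟨q.2, Finset.mem_univ _⟩))
  · intro q hq; simp at hq ⊢; exact hq
  · intro q hq; simp at hq ⊢; exact hq
  · intro q hq; simp
  · intro q hq; simp
  · intro q hq
    simp [Equiv.arrowCongr, Equiv.subtypeUnivEquiv]

/-- on a convex `B ⊆ 𝒳_N` whose `‖·‖_op`-diameter is at most `ε`, and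
on which each `hom_{F_{(e)}}` is bounded by `Mb e`, the fluctuation of `hom_F` is at
most `N · ε · Σ_{e ∈ E(F)} Mb e`. -/
theorem hom_fluctuation_on_convex {n N : ℕ}
    (F : SimpleGraph (Fin n)) [DecidableRel F.Adj] (hne : F.edgeSet.Nonempty)
    (B : Set (Matrix (Fin N) (Fin N) ℝ)) (hBconv : Convex ℝ B) (hBX : B ⊆ XN N)
    (ε : ℝ) (hdiam : ∀ X ∈ B, ∀ Y ∈ B, opNorm (X - Y) ≤ ε)
    (Mb : Fin n × Fin n → ℝ)
    (hMb : ∀ e ∈ Finset.univ.filter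
        (fun e : Fin n × Fin n => e.1 < e.2 ∧ F.Adj e.1 e.2),
      ∀ W ∈ B, homOn F ({e.1, e.2}ᶜ) W ≤ Mb e) :
    ∀ X ∈ B, ∀ Y ∈ B,
      |homOn F Finset.univ X - homOn F Finset.univ Y| ≤
        (N : ℝ) * ε *
          ∑ e ∈ Finset.univ.filter
              (fun e : Fin n × Fin n => e.1 < e.2 ∧ F.Adj e.1 e.2),
            Mb e := by
  intro X hX Y hY
  set Ed := Finset.univ.filter (fun q : Fin n × Fin n => q.1 < q.2 ∧ F.Adj q.1 q.2) with hEd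
  set Z := X - Y with hZ
  set g : ℝ → ℝ := fun t =>
    ∑ φ : Fin n → Fin N, ∏ q ∈ Ed, (Y + t • (X - Y)) (φ q.1) (φ q.2) with hg
  set D : ℝ → ℝ := fun t => ∑ φ : Fin n → Fin N, ∑ q ∈ Ed,
      (∏ p ∈ Ed.erase q, (Y + t • (X - Y)) (φ p.1) (φ p.2)) * Z (φ q.1) (φ q.2) with hD
  have hent : ∀ (t : ℝ) (i j : Fin N),
      HasDerivAt (fun t : ℝ => (Y + t • (X - Y)) i j) (Z i j) t := by
    intro t i j
    have h := ((hasDerivAt_id t).mul_const (Z i j)).const_add (Y i j)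
    simpa [Matrix.add_apply, Matrix.smul_apply, smul_eq_mul, hZ] using h
  have hderiv : ∀ t : ℝ, HasDerivAt g (D t) t := by
    intro t
    apply HasDerivAt.fun_sum
    intro φ _
    have := HasDerivAt.fun_finset_prod (u := Ed)
      (f := fun q t => (Y + t • (X - Y)) (φ q.1) (φ q.2))
      (f' := fun q => Z (φ q.1) (φ q.2)) (x := t)
      (fun q _ => hent t (φ q.1) (φ q.2))
    simpa [smul_eq_mul] using this
  have hεnn : 0 ≤ ε := le_trans (norm_nonneg _) (hdiam X hX Y hY)
  have hbound : ∀ t ∈ Set.Icc (0:ℝ) 1, ‖D t‖ ≤ (N : ℝ) * ε * ∑ q ∈ Ed, Mb q := by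
    intro t ht
    have hWt : Y + t • (X - Y) ∈ B := hBconv.add_smul_sub_mem hY hX ht
    have hWtX : Y + t • (X - Y) ∈ XN N := hBX hWt
    have hcomm : D t = ∑ q ∈ Ed, ∑ φ : Fin n → Fin N,
        (∏ p ∈ Ed.erase q, (Y + t • (X - Y)) (φ p.1) (φ p.2)) * Z (φ q.1) (φ q.2) :=
      Finset.sum_comm
    rw [Real.norm_eq_abs, hcomm]
    calc |∑ q ∈ Ed, ∑ φ : Fin n → Fin N,
          (∏ p ∈ Ed.erase q, (Y + t • (X - Y)) (φ p.1) (φ p.2)) * Z (φ q.1) (φ q.2)|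
        ≤ ∑ q ∈ Ed, |∑ φ : Fin n → Fin N,
          (∏ p ∈ Ed.erase q, (Y + t • (X - Y)) (φ p.1) (φ p.2)) * Z (φ q.1) (φ q.2)| :=
        Finset.abs_sum_le_sum_abs _ _
      _ ≤ ∑ q ∈ Ed, (N : ℝ) * ε * Mb q := by
          apply Finset.sum_le_sum
          intro q hq
          have hq' : q ∈ Finset.univ.filter
              (fun q : Fin n × Fin n => q.1 < q.2 ∧ F.Adj q.1 q.2) := hq
          have h1 := term_bound (N := N) F hq' (Y + t • (X - Y)) Z hWtX
          refine le_trans h1 ?_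
          have hZε : opNorm Z ≤ ε := hdiam X hX Y hY
          have hhomnn : 0 ≤ homOn F ({q.1, q.2}ᶜ) (Y + t • (X - Y)) := by
            unfold homOn
            exact Finset.sum_nonneg fun ψ _ => prod_entries_nonneg (n := n) hWtX _ _ _
          have hhomle : homOn F ({q.1, q.2}ᶜ) (Y + t • (X - Y)) ≤ Mb q := hMb q hq' _ hWt
          calc (N : ℝ) * opNorm Z * homOn F ({q.1, q.2}ᶜ) (Y + t • (X - Y))
              ≤ (N : ℝ) * ε * homOn F ({q.1, q.2}ᶜ) (Y + t • (X - Y)) := by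
                apply mul_le_mul_of_nonneg_right _ hhomnn
                exact mul_le_mul_of_nonneg_left hZε (Nat.cast_nonneg N)
            _ ≤ (N : ℝ) * ε * Mb q :=
                mul_le_mul_of_nonneg_left hhomle (by positivity)
      _ = (N : ℝ) * ε * ∑ q ∈ Ed, Mb q := by rw [Finset.mul_sum]
  have hmvt := (convex_Icc (0:ℝ) 1).norm_image_sub_le_of_norm_hasDerivWithin_le
    (fun x _ => (hderiv x).hasDerivWithinAt) hbound
    (Set.left_mem_Icc.mpr zero_le_one) (Set.right_mem_Icc.mpr zero_le_one)
  have hg1 : g 1 = homOn F Finset.univ X := by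
    show (∑ φ : Fin n → Fin N, ∏ q ∈ Ed, (Y + (1:ℝ) • (X - Y)) (φ q.1) (φ q.2)) = _
    have h1 : Y + (1:ℝ) • (X - Y) = X := by rw [one_smul]; abel
    rw [h1, homOn_univ, hEd]
  have hg0 : g 0 = homOn F Finset.univ Y := by
    show (∑ φ : Fin n → Fin N, ∏ q ∈ Ed, (Y + (0:ℝ) • (X - Y)) (φ q.1) (φ q.2)) = _
    have h0 : Y + (0:ℝ) • (X - Y) = Y := by rw [zero_smul, add_zero]
    rw [h0, homOn_univ, hEd]
  rw [hg1, hg0, Real.norm_eq_abs] at hmvt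
  simpa using hmvt
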